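/- Let c > 0 and let u be a nonnegative monotone submodular set function on a finite ground set N with u(∅) > 0 and u(S ∪ {j}) − u(S) ≤ u(∅)/c for all S ⊆ N and j ∈ N ∖ S. Let R be a random subset of N with independent inclusion probabilities p ∈ [0,1]^N. Then E[ E[u(R)] / u(R) ] ≤ 2 + 4/c (note u(R) ≥ u(∅) > 0 always, by monotonicity). -/

import Mathlib

open Finset MeasureTheory

set_option maxHeartbeats 1000000

/-- A set function `u` on a finite ground set is submodular if
`u(S ∩ T) + u(S ∪ T) ≤ u(S) + u(T)` for all `S, T`. -/
def Submodular {N : Type*} [DecidableEq N] (u : Finset N → ℝ) : Prop :=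
  ∀ S T : Finset N, u (S ∩ T) + u (S ∪ T) ≤ u S + u T

namespace ES3
set_option linter.unusedSectionVars false

variable {N : Type*} [Fintype N] [DecidableEq N]

def rho (p : N → ℝ) (j : N) (b : Bool) : ℝ := if b then p j else 1 - p j
def W (p : N → ℝ) (ω : N → Bool) : ℝ := ∏ j, rho p j (ω j)
def Tj (p : N → ℝ) (j : N) (F : (N → Bool) → ℝ) (ω : N → Bool) : ℝ :=
  p j * F (Function.update ω j true) + (1 - p j) * F (Function.update ω j false)
def override (s A : Finset N) (ω : N → Bool) : N → Bool :=
  fun k => if k ∈ s then decide (k ∈ A) else ω k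
def piW (p : N → ℝ) (s A : Finset N) : ℝ := ∏ k ∈ s, rho p k (decide (k ∈ A))
def Es (p : N → ℝ) (s : Finset N) (F : (N → Bool) → ℝ) (ω : N → Bool) : ℝ :=
  ∑ A ∈ s.powerset, piW p s A * F (override s A ω)
def Dj (j : N) (F : (N → Bool) → ℝ) (ω : N → Bool) : ℝ :=
  F (Function.update ω j true) - F (Function.update ω j false)
def Vj (p : N → ℝ) (j : N) (F : (N → Bool) → ℝ) (ω : N → Bool) : ℝ :=
  p j * (1 - p j) * (Dj j F ω) ^ 2

lemma symm_update (j : N) (b b' : Bool) (τ : {k // k ≠ j} → Bool) :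
    Function.update ((Equiv.funSplitAt j Bool).symm (b, τ)) j b'
      = (Equiv.funSplitAt j Bool).symm (b', τ) := by
  funext k
  by_cases h : k = j
  · subst h; simp [Equiv.funSplitAt, Equiv.piSplitAt, Function.update]
  · simp [Equiv.funSplitAt, Equiv.piSplitAt, Function.update, h]

lemma W_symm (p : N → ℝ) (j : N) (b : Bool) (τ : {k // k ≠ j} → Bool) :
    W p ((Equiv.funSplitAt j Bool).symm (b, τ))
      = rho p j b * ∏ k : {k // k ≠ j}, rho p k.1 (τ k) := by
  unfold W
  rw [← Finset.prod_erase_mul _ _ (Finset.mem_univ j)]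
  rw [mul_comm]
  congr 1
  · simp [Equiv.funSplitAt, Equiv.piSplitAt]
  · rw [Finset.prod_subtype (p := fun k => k ≠ j) (Finset.univ.erase j) (by simp)
      (fun k => rho p k (((Equiv.funSplitAt j Bool).symm (b, τ)) k))]
    apply Finset.prod_congr rfl
    intro k _
    congr 1
    simp [Equiv.funSplitAt, Equiv.piSplitAt, k.2]

/-- Master lemma: expectation invariant under Tj. -/
lemma sumW_Tj (p : N → ℝ) (j : N) (F : (N → Bool) → ℝ) :
    ∑ ω, W p ω * Tj p j F ω = ∑ ω, W p ω * F ω := by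
  have e := (Equiv.funSplitAt j Bool).symm
  rw [← Equiv.sum_comp (Equiv.funSplitAt j Bool).symm (fun ω => W p ω * Tj p j F ω),
      ← Equiv.sum_comp (Equiv.funSplitAt j Bool).symm (fun ω => W p ω * F ω)]
  rw [Fintype.sum_prod_type, Fintype.sum_prod_type]
  rw [Finset.sum_comm, Finset.sum_comm (s := Finset.univ (α := Bool))]
  apply Finset.sum_congr rfl
  intro τ _
  simp only [Fintype.sum_bool, W_symm, Tj, symm_update, rho]
  norm_num
  ring

lemma Es_empty (p : N → ℝ) (F : (N → Bool) → ℝ) (ω : N → Bool) : Es p ∅ F ω = F ω := by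
  have : override ∅ ∅ ω = ω := by funext k; simp [override]
  simp [Es, piW, this]

lemma override_insert_notmem (s A : Finset N) (j : N) (hj : j ∉ s) (hA : j ∉ A) (ω : N → Bool) :
    override (insert j s) A ω = override s A (Function.update ω j false) := by
  funext k
  by_cases h : k = j
  · subst h; simp [override, hj, hA]
  · simp [override, h, Function.update, Ne.symm h]

lemma override_insert_mem (s A : Finset N) (j : N) (hj : j ∉ s) (ω : N → Bool) :
    override (insert j s) (insert j A) ω = override s A (Function.update ω j true) := by
  funext k
  by_cases h : k = j
  · subst h; simp [override, hj]
  · simp [override, h, Function.update, Ne.symm h]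

lemma Es_insert (p : N → ℝ) (s : Finset N) (j : N) (hj : j ∉ s) (F : (N → Bool) → ℝ)
    (ω : N → Bool) : Es p (insert j s) F ω = Tj p j (Es p s F) ω := by
  rw [Tj]
  unfold Es
  rw [Finset.powerset_insert, Finset.sum_union ?hd, Finset.sum_image ?hi]
  case hd =>
    rw [Finset.disjoint_left]
    rintro A hA hA'
    rw [Finset.mem_powerset] at hA
    rw [Finset.mem_image] at hA'
    obtain ⟨B, _, rfl⟩ := hA'
    exact hj (hA (Finset.mem_insert_self j B))
  case hi =>
    intro A hA B hB h
    rw [Finset.mem_coe, Finset.mem_powerset] at hA hB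
    have hjA : j ∉ A := fun hx => hj (hA hx)
    have hjB : j ∉ B := fun hx => hj (hB hx)
    rw [← Finset.erase_insert hjA, ← Finset.erase_insert hjB, h]
  have A1 : ∑ A ∈ s.powerset, piW p (insert j s) A * F (override (insert j s) A ω)
      = (1 - p j) * ∑ A ∈ s.powerset, piW p s A * F (override s A (Function.update ω j false)) := by
    rw [Finset.mul_sum]
    apply Finset.sum_congr rfl
    intro A hA
    rw [Finset.mem_powerset] at hA
    have hjA : j ∉ A := fun hx => hj (hA hx)
    rw [override_insert_notmem s A j hj hjA, piW, Finset.prod_insert hj]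
    have : rho p j (decide (j ∈ A)) = 1 - p j := by simp [rho, hjA]
    rw [this, piW]; ring
  have A2 : ∑ A ∈ s.powerset,
        piW p (insert j s) (insert j A) * F (override (insert j s) (insert j A) ω)
      = p j * ∑ A ∈ s.powerset, piW p s A * F (override s A (Function.update ω j true)) := by
    rw [Finset.mul_sum]
    apply Finset.sum_congr rfl
    intro A hA
    rw [Finset.mem_powerset] at hA
    have hjA : j ∉ A := fun hx => hj (hA hx)
    rw [override_insert_mem s A j hj, piW, Finset.prod_insert hj]
    have h1 : rho p j (decide (j ∈ insert j A)) = p j := by simp [rho]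
    have h2 : ∏ k ∈ s, rho p k (decide (k ∈ insert j A)) = piW p s A := by
      apply Finset.prod_congr rfl
      intro k hk
      have : k ≠ j := fun h => hj (h ▸ hk)
      simp [Finset.mem_insert, this]
    rw [h1, h2]; ring
  rw [A1, A2]; ring

lemma Es_one (p : N → ℝ) (s : Finset N) : ∀ ω, Es p s (fun _ => 1) ω = 1 := by
  induction s using Finset.induction with
  | empty => intro ω; rw [Es_empty]
  | insert _ _ hj ih =>
    intro ω
    rw [Es_insert _ _ _ hj, Tj]
    simp only [ih]
    ring

lemma sum_piW (p : N → ℝ) (s : Finset N) : ∑ A ∈ s.powerset, piW p s A = 1 := by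
  have := Es_one p s (fun _ => true)
  unfold Es at this
  simpa using this

lemma piW_nonneg {p : N → ℝ} (hp : ∀ j, 0 ≤ p j ∧ p j ≤ 1) (s A : Finset N) : 0 ≤ piW p s A := by
  apply Finset.prod_nonneg
  intro k _
  rcases hp k with ⟨h0, h1⟩
  cases h : decide (k ∈ A) <;> simp [rho] <;> linarith

lemma Es_invariant (p : N → ℝ) (s : Finset N) (j : N) (hj : j ∈ s) (F : (N → Bool) → ℝ)
    (ω : N → Bool) (b : Bool) : Es p s F (Function.update ω j b) = Es p s F ω := by
  unfold Es
  apply Finset.sum_congr rfl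
  intro A _
  have : override s A (Function.update ω j b) = override s A ω := by
    funext k
    by_cases h : k = j
    · subst h; simp [override, hj]
    · simp [override, Function.update, h]
  rw [this]

lemma Es_update_comm (p : N → ℝ) (s : Finset N) (j : N) (hj : j ∉ s) (F : (N → Bool) → ℝ)
    (ω : N → Bool) (b : Bool) :
    Es p s F (Function.update ω j b) = Es p s (fun ω' => F (Function.update ω' j b)) ω := by
  unfold Es
  apply Finset.sum_congr rfl
  intro A hA
  rw [Finset.mem_powerset] at hA
  have : override s A (Function.update ω j b) = Function.update (override s A ω) j b := by
    funext k
    by_cases h : k = j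
    · subst h; simp [override, hj, Function.update]
    · simp [override, Function.update, h]
  rw [this]

lemma Es_sq_le {p : N → ℝ} (hp : ∀ j, 0 ≤ p j ∧ p j ≤ 1) (s : Finset N) (F : (N → Bool) → ℝ)
    (ω : N → Bool) : (Es p s F ω) ^ 2 ≤ Es p s (fun ω' => F ω' ^ 2) ω := by
  have key := Finset.sum_mul_sq_le_sq_mul_sq s.powerset
    (fun A => Real.sqrt (piW p s A)) (fun A => Real.sqrt (piW p s A) * F (override s A ω))
  have e1 : ∀ A ∈ s.powerset, Real.sqrt (piW p s A) *
      (Real.sqrt (piW p s A) * F (override s A ω)) = piW p s A * F (override s A ω) := by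
    intro A _
    rw [← mul_assoc, Real.mul_self_sqrt (piW_nonneg hp s A)]
  have e2 : ∀ A ∈ s.powerset, Real.sqrt (piW p s A) ^ 2 = piW p s A := by
    intro A _
    rw [Real.sq_sqrt (piW_nonneg hp s A)]
  have e3 : ∀ A ∈ s.powerset, (Real.sqrt (piW p s A) * F (override s A ω)) ^ 2
      = piW p s A * F (override s A ω) ^ 2 := by
    intro A _
    rw [mul_pow, Real.sq_sqrt (piW_nonneg hp s A)]
  rw [Finset.sum_congr rfl e1, Finset.sum_congr rfl e2, Finset.sum_congr rfl e3,
    sum_piW, one_mul] at key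
  exact key

lemma W_nonneg {p : N → ℝ} (hp : ∀ j, 0 ≤ p j ∧ p j ≤ 1) (ω : N → Bool) : 0 ≤ W p ω := by
  apply Finset.prod_nonneg
  intro k _
  rcases hp k with ⟨h0, h1⟩
  cases h : ω k <;> simp [rho] <;> linarith

lemma Es_univ (p : N → ℝ) (F : (N → Bool) → ℝ) (ω : N → Bool) :
    Es p Finset.univ F ω = ∑ ω', W p ω' * F ω' := by
  unfold Es
  apply Finset.sum_nbij' (i := fun A => fun k => decide (k ∈ A))
    (j := fun ω' => Finset.univ.filter (fun k => ω' k = true))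
  · intro A _; exact Finset.mem_univ _
  · intro ω' _; exact Finset.mem_powerset.2 (Finset.subset_univ _)
  · intro A _
    ext k
    simp
  · intro ω' _
    funext k
    simp
  · intro A _
    have h1 : piW p Finset.univ A = W p (fun k => decide (k ∈ A)) := rfl
    have h2 : override Finset.univ A ω = fun k => decide (k ∈ A) := by
      funext k; simp [override]
    rw [h1, h2]

lemma sumW_one (p : N → ℝ) : ∑ ω, W p ω = 1 := by
  have h := Es_univ p (fun _ => 1) (fun _ => true)
  rw [Es_one p Finset.univ (fun _ => true)] at h
  simpa using h.symm

lemma Tj_update (p : N → ℝ) (j : N) (F : (N → Bool) → ℝ) (ω : N → Bool) (b : Bool) :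
    Tj p j F (Function.update ω j b) = Tj p j F ω := by
  simp [Tj, Function.update_idem]

lemma sumW_Es (p : N → ℝ) (s : Finset N) (F : (N → Bool) → ℝ) :
    ∑ ω, W p ω * Es p s F ω = ∑ ω, W p ω * F ω := by
  induction s using Finset.induction with
  | empty => simp [Es_empty]
  | @insert j s hj ih =>
    calc ∑ ω, W p ω * Es p (insert j s) F ω
        = ∑ ω, W p ω * Tj p j (Es p s F) ω := by
          apply Finset.sum_congr rfl; intro ω _; rw [Es_insert p s j hj]
      _ = ∑ ω, W p ω * Es p s F ω := sumW_Tj p j _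
      _ = ∑ ω, W p ω * F ω := ih

lemma sumW_Es_mul (p : N → ℝ) (s : Finset N) (F h : (N → Bool) → ℝ)
    (hinv : ∀ k ∈ s, ∀ ω b, h (Function.update ω k b) = h ω) :
    ∑ ω, W p ω * (Es p s F ω * h ω) = ∑ ω, W p ω * (F ω * h ω) := by
  induction s using Finset.induction with
  | empty => simp [Es_empty]
  | @insert j s hj ih =>
    have hjmem : j ∈ insert j s := Finset.mem_insert_self j s
    calc ∑ ω, W p ω * (Es p (insert j s) F ω * h ω)
        = ∑ ω, W p ω * Tj p j (fun ω' => Es p s F ω' * h ω') ω := by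
          apply Finset.sum_congr rfl; intro ω _
          rw [Es_insert p s j hj]
          simp only [Tj]
          rw [hinv j hjmem ω true, hinv j hjmem ω false]
          ring
      _ = ∑ ω, W p ω * (Es p s F ω * h ω) := sumW_Tj p j _
      _ = ∑ ω, W p ω * (F ω * h ω) :=
          ih (fun k hk => hinv k (Finset.mem_insert_of_mem hk))

lemma sumW_var_Tj (p : N → ℝ) (j : N) (G : (N → Bool) → ℝ) :
    ∑ ω, W p ω * (G ω - Tj p j G ω) ^ 2 = ∑ ω, W p ω * Vj p j G ω := by
  rw [← sumW_Tj p j (fun ω => (G ω - Tj p j G ω) ^ 2)]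
  apply Finset.sum_congr rfl
  intro ω _
  congr 1
  simp only [Tj, Vj, Dj, Function.update_idem]
  ring

lemma sumW_ind (p : N → ℝ) (j : N) (D : (N → Bool) → ℝ)
    (hD : ∀ ω b, D (Function.update ω j b) = D ω) :
    ∑ ω, W p ω * (if ω j then D ω else 0) = p j * ∑ ω, W p ω * D ω := by
  rw [← sumW_Tj p j (fun ω => if ω j then D ω else 0), Finset.mul_sum]
  apply Finset.sum_congr rfl
  intro ω _
  simp only [Tj, Function.update_self]
  rw [hD ω true, hD ω false]
  simp
  ring

lemma Es_sub (p : N → ℝ) (s : Finset N) (F G : (N → Bool) → ℝ) (ω : N → Bool) :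
    Es p s F ω - Es p s G ω = Es p s (fun ω' => F ω' - G ω') ω := by
  unfold Es
  rw [← Finset.sum_sub_distrib]
  apply Finset.sum_congr rfl
  intro A _
  ring

theorem efron_stein {p : N → ℝ} (hp : ∀ j, 0 ≤ p j ∧ p j ≤ 1) (s : Finset N)
    (F : (N → Bool) → ℝ) :
    ∑ ω, W p ω * (F ω - Es p s F ω) ^ 2 ≤ ∑ j ∈ s, ∑ ω, W p ω * Vj p j F ω := by
  induction s using Finset.induction with
  | empty => simp [Es_empty]
  | @insert j s hj ih =>
    set G := Es p s F with hG
    have hGinv : ∀ k ∈ s, ∀ ω b, G (Function.update ω k b) = G ω :=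
      fun k hk ω b => Es_invariant p s k hk F ω b
    have hTinv : ∀ k ∈ s, ∀ ω b, Tj p j G (Function.update ω k b) = Tj p j G ω := by
      intro k hk ω b
      have hkj : k ≠ j := fun h => hj (h ▸ hk)
      simp only [Tj]
      rw [Function.update_comm hkj, Function.update_comm hkj, hGinv k hk, hGinv k hk]
    have hhinv : ∀ k ∈ s, ∀ ω b,
        (G (Function.update ω k b) - Tj p j G (Function.update ω k b)) = G ω - Tj p j G ω := by
      intro k hk ω b; rw [hGinv k hk, hTinv k hk]
    -- expansion
    have expand : ∀ ω, W p ω * (F ω - Tj p j G ω) ^ 2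
        = W p ω * (F ω - G ω) ^ 2 + 2 * (W p ω * ((F ω - G ω) * (G ω - Tj p j G ω)))
          + W p ω * (G ω - Tj p j G ω) ^ 2 := by
      intro ω; ring
    have cross : ∑ ω, W p ω * ((F ω - G ω) * (G ω - Tj p j G ω)) = 0 := by
      have e1 : ∀ ω, W p ω * ((F ω - G ω) * (G ω - Tj p j G ω))
          = W p ω * (F ω * (G ω - Tj p j G ω)) - W p ω * (G ω * (G ω - Tj p j G ω)) := by
        intro ω; ring
      rw [Finset.sum_congr rfl (fun ω _ => e1 ω), Finset.sum_sub_distrib]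
      rw [sumW_Es_mul p s F (fun ω => G ω - Tj p j G ω) hhinv]
      ring
    have step1 : ∑ ω, W p ω * (F ω - Es p (insert j s) F ω) ^ 2
        = ∑ ω, W p ω * (F ω - G ω) ^ 2 + ∑ ω, W p ω * (G ω - Tj p j G ω) ^ 2 := by
      calc ∑ ω, W p ω * (F ω - Es p (insert j s) F ω) ^ 2
          = ∑ ω, W p ω * (F ω - Tj p j G ω) ^ 2 := by
            apply Finset.sum_congr rfl; intro ω _; rw [Es_insert p s j hj]
        _ = ∑ ω, (W p ω * (F ω - G ω) ^ 2
              + 2 * (W p ω * ((F ω - G ω) * (G ω - Tj p j G ω)))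
              + W p ω * (G ω - Tj p j G ω) ^ 2) :=
            Finset.sum_congr rfl (fun ω _ => expand ω)
        _ = ∑ ω, W p ω * (F ω - G ω) ^ 2
              + 2 * ∑ ω, (W p ω * ((F ω - G ω) * (G ω - Tj p j G ω)))
              + ∑ ω, W p ω * (G ω - Tj p j G ω) ^ 2 := by
            rw [Finset.sum_add_distrib, Finset.sum_add_distrib, Finset.mul_sum]
        _ = _ := by rw [cross]; ring
    -- the new variance term
    have varle : ∑ ω, W p ω * (G ω - Tj p j G ω) ^ 2 ≤ ∑ ω, W p ω * Vj p j F ω := by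
      rw [sumW_var_Tj]
      have pointwise : ∀ ω, Vj p j G ω ≤ p j * (1 - p j) * Es p s (fun ω' => (Dj j F ω') ^ 2) ω := by
        intro ω
        have hcomm : Dj j G ω = Es p s (fun ω' => Dj j F ω') ω := by
          unfold Dj
          rw [hG, Es_update_comm p s j hj F ω true, Es_update_comm p s j hj F ω false,
            Es_sub]
        have hsq : (Dj j G ω) ^ 2 ≤ Es p s (fun ω' => (Dj j F ω') ^ 2) ω := by
          rw [hcomm]
          exact Es_sq_le hp s (fun ω' => Dj j F ω') ω
        unfold Vj
        have hpj : 0 ≤ p j * (1 - p j) := by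
          rcases hp j with ⟨h0, h1⟩; nlinarith
        exact mul_le_mul_of_nonneg_left hsq hpj
      calc ∑ ω, W p ω * Vj p j G ω
          ≤ ∑ ω, W p ω * (p j * (1 - p j) * Es p s (fun ω' => (Dj j F ω') ^ 2) ω) := by
            apply Finset.sum_le_sum
            intro ω _
            exact mul_le_mul_of_nonneg_left (pointwise ω) (W_nonneg hp ω)
        _ = p j * (1 - p j) * ∑ ω, W p ω * Es p s (fun ω' => (Dj j F ω') ^ 2) ω := by
            rw [Finset.mul_sum]; apply Finset.sum_congr rfl; intro ω _; ring
        _ = p j * (1 - p j) * ∑ ω, W p ω * (Dj j F ω) ^ 2 := by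
            rw [sumW_Es]
        _ = ∑ ω, W p ω * Vj p j F ω := by
            rw [Finset.mul_sum]; apply Finset.sum_congr rfl; intro ω _
            unfold Vj; ring
    rw [step1, Finset.sum_insert hj]
    have := ih
    linarith

def RR (ω : N → Bool) : Finset N := Finset.univ.filter (fun j => ω j = true)

lemma RR_update_true (ω : N → Bool) (j : N) :
    RR (Function.update ω j true) = insert j (RR ω) := by
  ext k
  by_cases h : k = j
  · subst h; simp [RR]
  · simp [RR, Function.update, h]

lemma RR_update_false (ω : N → Bool) (j : N) :
    RR (Function.update ω j false) = (RR ω).erase j := by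
  ext k
  by_cases h : k = j
  · subst h; simp [RR]
  · simp [RR, Function.update, h]

lemma sum_marginals {u : Finset N → ℝ} (hsub : Submodular u) (S : Finset N) :
    ∑ j ∈ S, (u S - u (S.erase j)) ≤ u S - u ∅ := by
  induction S using Finset.induction with
  | empty => simp
  | @insert a S' ha ih =>
    rw [Finset.sum_insert ha]
    have e1 : (insert a S').erase a = S' := Finset.erase_insert ha
    have key : ∀ j ∈ S', u (insert a S') - u ((insert a S').erase j)
        ≤ u S' - u (S'.erase j) := by
      intro j hj
      have hja : j ≠ a := fun h => ha (h ▸ hj)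
      have e2 : (insert a S').erase j = insert a (S'.erase j) := by
        rw [Finset.erase_insert_of_ne hja.symm]
      have e3 : insert a (S'.erase j) ∩ S' = S'.erase j := by
        ext k
        simp only [Finset.mem_inter, Finset.mem_insert, Finset.mem_erase]
        constructor
        · rintro ⟨h1 | h1, h2⟩
          · exact absurd (h1 ▸ h2) ha
          · exact ⟨h1.1, h2⟩
        · rintro ⟨h1, h2⟩; exact ⟨Or.inr ⟨h1, h2⟩, h2⟩
      have e4 : insert a (S'.erase j) ∪ S' = insert a S' := by
        ext k
        simp only [Finset.mem_union, Finset.mem_insert, Finset.mem_erase]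
        constructor
        · rintro (h1 | h1)
          · rcases h1 with h1 | h1
            · exact Or.inl h1
            · exact Or.inr h1.2
          · exact Or.inr h1
        · rintro (h1 | h1)
          · exact Or.inl (Or.inl h1)
          · by_cases hkj : k = j
            · exact Or.inr (hkj ▸ hj)
            · exact Or.inl (Or.inr ⟨hkj, h1⟩)
      have := hsub (insert a (S'.erase j)) S'
      rw [e3, e4] at this
      rw [e2]
      linarith
    have sle : ∑ j ∈ S', (u (insert a S') - u ((insert a S').erase j))
        ≤ ∑ j ∈ S', (u S' - u (S'.erase j)) := Finset.sum_le_sum key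
    rw [e1]
    linarith

theorem core_bound {c : ℝ} (hc : 0 < c) {u : Finset N → ℝ}
    (hnn : ∀ S, 0 ≤ u S) (hmono : Monotone u) (hsub : Submodular u) (hne : 0 < u ∅)
    (hM : ∀ (S : Finset N), ∀ j ∉ S, u (insert j S) - u S ≤ u ∅ / c)
    {p : N → ℝ} (hp : ∀ j, 0 ≤ p j ∧ p j ≤ 1) :
    ∑ ω, W p ω * ((∑ ω', W p ω' * u (RR ω')) / u (RR ω)) ≤ 2 + 4 / c := by
  set M := u ∅ / c with hMdef
  have hM0 : 0 ≤ M := le_of_lt (div_pos hne hc)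
  set f : (N → Bool) → ℝ := fun ω => u (RR ω) with hf
  set μ : ℝ := ∑ ω', W p ω' * f ω' with hμ
  -- basic facts
  have hfl : ∀ ω, u ∅ ≤ f ω := fun ω => hmono (Finset.empty_subset _)
  have hμl : u ∅ ≤ μ := by
    calc u ∅ = ∑ ω', W p ω' * u ∅ := by rw [← Finset.sum_mul, sumW_one, one_mul]
    _ ≤ μ := Finset.sum_le_sum (fun ω _ =>
        mul_le_mul_of_nonneg_left (hfl ω) (W_nonneg hp ω))
  have hμ0 : 0 < μ := lt_of_lt_of_le hne hμl
  -- Dj bounds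
  have hDj : ∀ j ω, Dj j f ω = u (insert j (RR ω)) - u ((RR ω).erase j) := by
    intro j ω
    rw [Dj, hf]
    simp only
    rw [RR_update_true, RR_update_false]
  have hDge : ∀ j ω, 0 ≤ Dj j f ω := by
    intro j ω
    rw [hDj]
    have : (RR ω).erase j ⊆ insert j (RR ω) :=
      (Finset.erase_subset _ _).trans (Finset.subset_insert _ _)
    linarith [hmono this]
  have hDle : ∀ j ω, Dj j f ω ≤ M := by
    intro j ω
    rw [hDj]
    have e : insert j ((RR ω).erase j) = insert j (RR ω) := by
      ext k
      by_cases h : k = j <;> simp [h]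
    have := hM ((RR ω).erase j) j (Finset.notMem_erase j _)
    rw [e] at this
    linarith
  -- variance bound
  have hvar : ∑ ω, W p ω * (f ω - μ) ^ 2 ≤ M * μ := by
    have h1 : ∑ ω, W p ω * (f ω - μ) ^ 2 = ∑ ω, W p ω * (f ω - Es p Finset.univ f ω) ^ 2 := by
      apply Finset.sum_congr rfl; intro ω _; rw [Es_univ]
    rw [h1]
    refine le_trans (efron_stein hp Finset.univ f) ?_
    have h2 : ∀ j, ∑ ω, W p ω * Vj p j f ω ≤ M * ∑ ω, W p ω * (if ω j then Dj j f ω else 0) := by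
      intro j
      rw [sumW_ind p j (Dj j f) (fun ω b => by
        simp only [Dj, Function.update_idem])]
      have pointwise : ∀ ω, Vj p j f ω ≤ p j * (M * Dj j f ω) := by
        intro ω
        rcases hp j with ⟨h0, h1⟩
        have d0 := hDge j ω
        have d1 := hDle j ω
        unfold Vj
        nlinarith [mul_nonneg h0 (mul_nonneg (sub_nonneg.2 d1) d0),
          mul_nonneg (mul_nonneg h0 h0) (sq_nonneg (Dj j f ω))]
      calc ∑ ω, W p ω * Vj p j f ω ≤ ∑ ω, W p ω * (p j * (M * Dj j f ω)) :=
            Finset.sum_le_sum (fun ω _ =>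
              mul_le_mul_of_nonneg_left (pointwise ω) (W_nonneg hp ω))
        _ = M * (p j * ∑ ω, W p ω * Dj j f ω) := by
            rw [Finset.mul_sum, Finset.mul_sum]
            apply Finset.sum_congr rfl; intro ω _; ring
    refine le_trans (Finset.sum_le_sum (fun j _ => h2 j)) ?_
    rw [← Finset.mul_sum]
    have h3 : ∑ j, ∑ ω, W p ω * (if ω j then Dj j f ω else 0) ≤ μ := by
      rw [Finset.sum_comm]
      have h4 : ∀ ω, ∑ j, W p ω * (if ω j then Dj j f ω else 0) ≤ W p ω * f ω := by
        intro ω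
        rw [← Finset.mul_sum]
        apply mul_le_mul_of_nonneg_left ?_ (W_nonneg hp ω)
        have h5 : ∑ j ∈ RR ω, Dj j f ω = ∑ j, (if ω j then Dj j f ω else 0) := by
          unfold RR
          rw [Finset.sum_filter]
        rw [← h5]
        have h6 : ∀ j ∈ RR ω, Dj j f ω = u (RR ω) - u ((RR ω).erase j) := by
          intro j hj
          rw [hDj]
          have : insert j (RR ω) = RR ω := Finset.insert_eq_self.2 hj
          rw [this]
        rw [Finset.sum_congr rfl h6]
        have := sum_marginals hsub (RR ω)
        have h7 := hnn ∅
        calc ∑ j ∈ RR ω, (u (RR ω) - u ((RR ω).erase j)) ≤ u (RR ω) - u ∅ := this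
          _ ≤ f ω := by rw [hf]; simp only; linarith
      exact le_trans (Finset.sum_le_sum (fun ω _ => h4 ω)) (le_of_eq rfl)
    exact mul_le_mul_of_nonneg_left h3 hM0
  -- Chebyshev + final
  set bad : Finset (N → Bool) := Finset.univ.filter (fun ω => f ω ≤ μ / 2) with hbad
  have cheb : ∑ ω ∈ bad, W p ω ≤ 4 * M / μ := by
    have h1 : ∀ ω ∈ bad, W p ω * (μ / 2) ^ 2 ≤ W p ω * (f ω - μ) ^ 2 := by
      intro ω hω
      rw [hbad, Finset.mem_filter] at hω
      apply mul_le_mul_of_nonneg_left ?_ (W_nonneg hp ω)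
      have : μ / 2 ≤ μ - f ω := by linarith [hω.2]
      have h2 : (μ / 2) ^ 2 ≤ (μ - f ω) ^ 2 := by
        apply sq_le_sq'
        · linarith
        · exact this
      calc (μ / 2) ^ 2 ≤ (μ - f ω) ^ 2 := h2
        _ = (f ω - μ) ^ 2 := by ring
    have h3 : (∑ ω ∈ bad, W p ω) * (μ / 2) ^ 2 ≤ M * μ := by
      rw [Finset.sum_mul]
      calc ∑ ω ∈ bad, W p ω * (μ / 2) ^ 2 ≤ ∑ ω ∈ bad, W p ω * (f ω - μ) ^ 2 :=
            Finset.sum_le_sum h1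
        _ ≤ ∑ ω, W p ω * (f ω - μ) ^ 2 := by
            apply Finset.sum_le_sum_of_subset_of_nonneg (Finset.subset_univ _)
            intro ω _ _
            exact mul_nonneg (W_nonneg hp ω) (sq_nonneg _)
        _ ≤ M * μ := hvar
    have hμ2 : (0:ℝ) < (μ / 2) ^ 2 := by positivity
    rw [le_div_iff₀ hμ0]
    nlinarith [h3, hμ0]
  calc ∑ ω, W p ω * (μ / f ω)
      = ∑ ω ∈ bad, W p ω * (μ / f ω) + ∑ ω ∈ Finset.univ \ bad, W p ω * (μ / f ω) := by
        rw [add_comm, Finset.sum_sdiff (Finset.subset_univ _)]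
    _ ≤ ∑ ω ∈ bad, W p ω * (μ / u ∅) + ∑ ω ∈ Finset.univ \ bad, W p ω * 2 := by
        apply add_le_add
        · apply Finset.sum_le_sum
          intro ω _
          apply mul_le_mul_of_nonneg_left ?_ (W_nonneg hp ω)
          apply div_le_div_of_nonneg_left (le_of_lt hμ0) hne (hfl ω)
        · apply Finset.sum_le_sum
          intro ω hω
          rw [Finset.mem_sdiff, hbad, Finset.mem_filter] at hω
          have hgood : μ / 2 < f ω := by
            by_contra h
            exact hω.2 ⟨Finset.mem_univ ω, le_of_not_gt h⟩
          apply mul_le_mul_of_nonneg_left ?_ (W_nonneg hp ω)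
          rw [div_le_iff₀ (lt_trans (by linarith) hgood)]
          linarith
    _ = (μ / u ∅) * ∑ ω ∈ bad, W p ω + 2 * ∑ ω ∈ Finset.univ \ bad, W p ω := by
        rw [Finset.mul_sum, Finset.mul_sum]
        congr 1
        · apply Finset.sum_congr rfl; intro ω _; ring
        · apply Finset.sum_congr rfl; intro ω _; ring
    _ ≤ (μ / u ∅) * (4 * M / μ) + 2 * 1 := by
        apply add_le_add
        · exact mul_le_mul_of_nonneg_left cheb (le_of_lt (div_pos hμ0 hne))
        · have : ∑ ω ∈ Finset.univ \ bad, W p ω ≤ ∑ ω, W p ω := by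
            apply Finset.sum_le_sum_of_subset_of_nonneg (Finset.subset_univ _)
            intro ω _ _
            exact W_nonneg hp ω
          rw [sumW_one] at this
          linarith
    _ ≤ 2 + 4 / c := by
        have hu0 : u ∅ ≠ 0 := ne_of_gt hne
        have hμne : μ ≠ 0 := ne_of_gt hμ0
        have hc0 : c ≠ 0 := ne_of_gt hc
        have : (μ / u ∅) * (4 * M / μ) = 4 / c := by
          rw [hMdef]
          field_simp
        rw [this]
        linarith


end ES3

/-- for a nonnegative monotone submodular `u` with `u(∅) > 0` and marginal
values bounded by `u(∅)/c`, and `R` a random subset with independent inclusion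
probabilities `p` (modelled by the product of Bernoulli measures),
`E[ E[u(R)] / u(R) ] ≤ 2 + 4/c`. -/
theorem expectation_inverse_bound {N : Type*} [Fintype N] [DecidableEq N]
    (c : ℝ) (hc : 0 < c)
    (u : Finset N → ℝ) (hnn : ∀ S, 0 ≤ u S) (hmono : Monotone u) (hsub : Submodular u)
    (hne : 0 < u ∅)
    (hM : ∀ (S : Finset N), ∀ j ∉ S, u (insert j S) - u S ≤ u ∅ / c)
    (p : N → ℝ) (hp : ∀ j, 0 ≤ p j ∧ p j ≤ 1)
    (ν : N → Measure Bool) [∀ j, IsProbabilityMeasure (ν j)]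
    (hν : ∀ j, ν j ({true} : Set Bool) = ENNReal.ofReal (p j)) :
    ∫ ω, (∫ ω', u (Finset.univ.filter (fun j => ω' j = true)) ∂(Measure.pi ν))
        / u (Finset.univ.filter (fun j => ω j = true)) ∂(Measure.pi ν)
      ≤ 2 + 4 / c := by
  set π := Measure.pi ν with hπ
  have hsingle : ∀ ω : N → Bool, (π {ω}).toReal = ES3.W p ω := by
    intro ω
    have h1 : ({ω} : Set (N → Bool)) = Set.pi Set.univ (fun j => {ω j}) :=
      (Set.univ_pi_singleton ω).symm
    rw [h1, hπ, Measure.pi_pi, ENNReal.toReal_prod]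
    apply Finset.prod_congr rfl
    intro j _
    rcases hp j with ⟨h0, h1⟩
    cases hb : ω j
    · have hfalse : ({false} : Set Bool) = ({true} : Set Bool)ᶜ := by
        ext b; cases b <;> simp
      rw [hfalse, prob_compl_eq_one_sub (MeasurableSet.singleton true), hν j]
      have : (1 : ENNReal) - ENNReal.ofReal (p j) = ENNReal.ofReal (1 - p j) := by
        rw [← ENNReal.ofReal_one, ← ENNReal.ofReal_sub _ h0]
      rw [this, ENNReal.toReal_ofReal (by linarith)]
      simp [ES3.rho]
    · rw [hν j, ENNReal.toReal_ofReal h0]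
      simp [ES3.rho]
  have hint : ∀ g : (N → Bool) → ℝ, ∫ ω, g ω ∂π = ∑ ω, ES3.W p ω * g ω := by
    intro g
    rw [MeasureTheory.integral_fintype (Integrable.of_finite)]
    apply Finset.sum_congr rfl
    intro ω _
    rw [Measure.real, hsingle ω, smul_eq_mul]
  rw [hint]
  have : ∀ ω : N → Bool, (∫ ω', u (Finset.univ.filter (fun j => ω' j = true)) ∂π)
      = ∑ ω', ES3.W p ω' * u (ES3.RR ω') := by
    intro ω
    rw [hint]
    rfl
  calc ∑ ω, ES3.W p ω * ((∫ ω', u (Finset.univ.filter (fun j => ω' j = true)) ∂π)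
        / u (Finset.univ.filter (fun j => ω j = true)))
      = ∑ ω, ES3.W p ω * ((∑ ω', ES3.W p ω' * u (ES3.RR ω')) / u (ES3.RR ω)) := by
        apply Finset.sum_congr rfl
        intro ω _
        rw [this ω]
        rfl
    _ ≤ 2 + 4 / c := ES3.core_bound hc hnn hmono hsub hne hM hp
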